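/- For n ≥ r ≥ 1, let l(n,6,r) denote the maximum of |F_1|/C(n,r) + |F_2|/C(n,r−1) over all families F_1 of r-element subsets of [n] and F_2 of (r−1)-element subsets of [n] such that F_1 ∪ F_2 does not contain a copy of the layers i and i−1 of a Q_6 for any 2 ≤ i ≤ 5. Then l(n+1,6,r+1) ≤ l(n,6,r) for all n ≥ r ≥ 1. -/

import Mathlib

/-- `F` contains a copy of the layers `i` and `i-1` of a `Q_6` (for some `2 ≤ i ≤ 5`),
inside the layers `r-1` and `r` of the power set of the ground type: there are `X` of size 6
and `Y` disjoint from `X` with `|Y| = r - i`, such that `Y ∪ A ∈ F` for every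
`A ⊆ X` with `|A| = i - 1` or `|A| = i`. -/
def ContainsQ6Layers {α : Type*} [DecidableEq α] (r : ℕ) (F : Finset (Finset α)) : Prop :=
  ∃ i : ℕ, 2 ≤ i ∧ i ≤ 5 ∧
    ∃ X Y : Finset α, X.card = 6 ∧ Disjoint X Y ∧ Y.card + i = r ∧
      (∀ A ⊆ X, A.card = i - 1 → Y ∪ A ∈ F) ∧
      (∀ A ⊆ X, A.card = i → Y ∪ A ∈ F)

/-- `lval n r` is the maximum density-sum `|F₁|/C(n,r) + |F₂|/C(n,r-1)` over families
`F₁ ⊆ [n]^(r)`, `F₂ ⊆ [n]^(r-1)` such that `F₁ ∪ F₂` contains no copy of two consecutive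
nontrivial layers of a `Q_6`. -/
noncomputable def lval (n r : ℕ) : ℝ :=
  sSup {x : ℝ | ∃ F₁ F₂ : Finset (Finset (Fin n)),
    (∀ A ∈ F₁, A.card = r) ∧ (∀ A ∈ F₂, A.card = r - 1) ∧
    ¬ ContainsQ6Layers r (F₁ ∪ F₂) ∧
    x = (F₁.card : ℝ) / (n.choose r : ℝ) + (F₂.card : ℝ) / (n.choose (r - 1) : ℝ)}

open Finset

namespace Q6Aux

lemma empty_no_copy {α : Type*} [DecidableEq α] (r : ℕ) (hr : 1 ≤ r) :
    ¬ ContainsQ6Layers r (∅ : Finset (Finset α)) := by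
  rintro ⟨i, hi2, hi5, X, Y, hX6, -, -, h1, -⟩
  obtain ⟨A, hAX, hAc⟩ := Finset.exists_subset_card_eq (s := X) (n := i - 1) (by omega)
  simpa using h1 A hAX hAc

/-- pulling back along `z.succAbove`. -/
noncomputable def pull {n : ℕ} (z : Fin (n+1)) (A : Finset (Fin (n+1))) : Finset (Fin n) :=
  A.preimage z.succAbove Fin.succAbove_right_injective.injOn

lemma image_pull {n : ℕ} (z : Fin (n+1)) (A : Finset (Fin (n+1))) :
    (pull z A).image z.succAbove = A.erase z := by
  classical
  ext x
  simp only [pull, Finset.mem_image, Finset.mem_preimage, Finset.mem_erase]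
  constructor
  · rintro ⟨a, ha, rfl⟩; exact ⟨Fin.succAbove_ne z a, ha⟩
  · rintro ⟨hx, hA⟩
    obtain ⟨a, ha⟩ := Fin.exists_succAbove_eq hx
    exact ⟨a, by rwa [ha], ha⟩

lemma insert_image_pull {n : ℕ} (z : Fin (n+1)) (A : Finset (Fin (n+1))) (hz : z ∈ A) :
    insert z ((pull z A).image z.succAbove) = A := by
  rw [image_pull, Finset.insert_erase hz]

lemma card_pull {n : ℕ} (z : Fin (n+1)) (A : Finset (Fin (n+1))) (hz : z ∈ A) :
    (pull z A).card = A.card - 1 := by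
  have := Finset.card_image_of_injective (pull z A)
    (Fin.succAbove_right_injective (p := z))
  rw [image_pull, Finset.card_erase_of_mem hz] at this
  omega

lemma pull_inj {n : ℕ} (z : Fin (n+1)) (A B : Finset (Fin (n+1)))
    (hA : z ∈ A) (hB : z ∈ B) (h : pull z A = pull z B) : A = B := by
  rw [← insert_image_pull z A hA, ← insert_image_pull z B hB, h]

/-- The link family. -/
noncomputable def link {n : ℕ} (z : Fin (n+1)) (F : Finset (Finset (Fin (n+1)))) :
    Finset (Finset (Fin n)) := by
  classical
  exact (F.filter (z ∈ ·)).image (pull z)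

lemma card_link {n : ℕ} (z : Fin (n+1)) (F : Finset (Finset (Fin (n+1)))) :
    (link z F).card = (F.filter (z ∈ ·)).card := by
  classical
  apply Finset.card_image_of_injOn
  intro A hA B hB h
  simp only [Finset.mem_coe, Finset.mem_filter] at hA hB
  exact pull_inj z A B hA.2 hB.2 h

lemma mem_link {n : ℕ} (z : Fin (n+1)) (F : Finset (Finset (Fin (n+1))))
    (B : Finset (Fin n)) :
    B ∈ link z F ↔ ∃ A ∈ F, z ∈ A ∧ pull z A = B := by
  classical
  simp [link, Finset.mem_image, Finset.mem_filter, and_assoc]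

lemma sum_card_link {n : ℕ} (F : Finset (Finset (Fin (n+1)))) :
    ∑ z : Fin (n+1), (link z F).card = ∑ A ∈ F, A.card := by
  classical
  simp only [card_link, Finset.card_filter]
  rw [Finset.sum_comm]
  refine Finset.sum_congr rfl fun A _ => ?_
  rw [Finset.sum_ite_mem, Finset.univ_inter, Finset.sum_const, smul_eq_mul, mul_one]

/-- If the link contains a Q6 copy at level r, the original contains one at level r+1. -/
lemma link_no_copy {n r : ℕ} (z : Fin (n+1)) (F₁ F₂ : Finset (Finset (Fin (n+1))))
    (h : ContainsQ6Layers r (link z F₁ ∪ link z F₂)) :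
    ContainsQ6Layers (r+1) (F₁ ∪ F₂) := by
  classical
  obtain ⟨i, hi2, hi5, X, Y, hX6, hdisj, hYi, hcop1, hcop2⟩ := h
  have hinj : Function.Injective z.succAbove := Fin.succAbove_right_injective
  have hznr : ∀ (S : Finset (Fin n)), z ∉ S.image z.succAbove := by
    intro S hzS
    obtain ⟨a, -, ha⟩ := Finset.mem_image.mp hzS
    exact Fin.succAbove_ne z a ha
  have main : ∀ A' ⊆ X.image z.succAbove,
      Y ∪ pull z A' ∈ link z F₁ ∪ link z F₂ →
      insert z (Y.image z.succAbove) ∪ A' ∈ F₁ ∪ F₂ := by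
    intro A' hA' hmem
    have hzA' : z ∉ A' := fun h => hznr X (hA' h)
    have hApull : (pull z A').image z.succAbove = A' := by
      rw [image_pull]
      exact Finset.erase_eq_of_notMem hzA'
    rw [Finset.mem_union, mem_link, mem_link] at hmem
    have : ∃ C ∈ F₁ ∪ F₂, z ∈ C ∧ pull z C = Y ∪ pull z A' := by
      rcases hmem with ⟨C, hC, hzC, he⟩ | ⟨C, hC, hzC, he⟩
      · exact ⟨C, Finset.mem_union_left _ hC, hzC, he⟩
      · exact ⟨C, Finset.mem_union_right _ hC, hzC, he⟩
    obtain ⟨C, hCmem, hzC, he⟩ := this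
    have : insert z (Y.image z.succAbove) ∪ A' = C := by
      rw [← insert_image_pull z C hzC, he, Finset.image_union, hApull,
        Finset.insert_union]
    rwa [this]
  have hsub : ∀ A' ⊆ X.image z.succAbove, pull z A' ⊆ X := by
    intro A' hA' a ha
    have h1 : z.succAbove a ∈ A' := Finset.mem_preimage.mp ha
    obtain ⟨x, hx, hxe⟩ := Finset.mem_image.mp (hA' h1)
    rwa [← hinj hxe]
  have hcardp : ∀ A' ⊆ X.image z.succAbove, (pull z A').card = A'.card := by
    intro A' hA'
    have hzA' : z ∉ A' := fun h => hznr X (hA' h)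
    have hApull : (pull z A').image z.succAbove = A' := by
      rw [image_pull]; exact Finset.erase_eq_of_notMem hzA'
    conv_rhs => rw [← hApull]
    exact (Finset.card_image_of_injective _ hinj).symm
  refine ⟨i, hi2, hi5, X.image z.succAbove, insert z (Y.image z.succAbove),
    by rw [Finset.card_image_of_injective _ hinj, hX6], ?_, ?_, ?_, ?_⟩
  · rw [Finset.disjoint_insert_right]
    refine ⟨hznr X, ?_⟩
    rw [Finset.disjoint_image hinj]
    exact hdisj
  · rw [Finset.card_insert_of_notMem (hznr Y), Finset.card_image_of_injective _ hinj]
    omega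
  · intro A' hA' hcard
    exact main A' hA' (hcop1 _ (hsub A' hA') (by rw [hcardp A' hA', hcard]))
  · intro A' hA' hcard
    exact main A' hA' (hcop2 _ (hsub A' hA') (by rw [hcardp A' hA', hcard]))

end Q6Aux

/-- `l(n+1,6,r+1) ≤ l(n,6,r)` for all `n ≥ r ≥ 1`. -/
theorem lval_monotone_uniformity (r n : ℕ) (hr : 1 ≤ r) (hn : r ≤ n) :
    lval (n + 1) (r + 1) ≤ lval n r := by
  classical
  open Q6Aux in
  have hc1 : 0 < (n.choose r : ℝ) := by exact_mod_cast Nat.choose_pos hn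
  have hc2 : 0 < (n.choose (r-1) : ℝ) := by exact_mod_cast Nat.choose_pos (by omega)
  have hC1 : 0 < ((n+1).choose (r+1) : ℝ) := by exact_mod_cast Nat.choose_pos (by omega)
  have hC2 : 0 < ((n+1).choose r : ℝ) := by exact_mod_cast Nat.choose_pos (by omega)
  have hbdd : ∀ x ∈ {x : ℝ | ∃ F₁ F₂ : Finset (Finset (Fin n)),
      (∀ A ∈ F₁, A.card = r) ∧ (∀ A ∈ F₂, A.card = r - 1) ∧
      ¬ ContainsQ6Layers r (F₁ ∪ F₂) ∧
      x = (F₁.card : ℝ) / (n.choose r : ℝ) + (F₂.card : ℝ) / (n.choose (r - 1) : ℝ)}, x ≤ 2 := by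
    rintro x ⟨F₁, F₂, h1, h2, -, rfl⟩
    have b1 : F₁.card ≤ n.choose r := by
      have : F₁ ⊆ Finset.powersetCard r Finset.univ := by
        intro A hA; rw [Finset.mem_powersetCard]; exact ⟨Finset.subset_univ A, h1 A hA⟩
      simpa using Finset.card_le_card this
    have b2 : F₂.card ≤ n.choose (r-1) := by
      have : F₂ ⊆ Finset.powersetCard (r-1) Finset.univ := by
        intro A hA; rw [Finset.mem_powersetCard]; exact ⟨Finset.subset_univ A, h2 A hA⟩
      simpa using Finset.card_le_card this
    have e1 : (F₁.card : ℝ) / (n.choose r : ℝ) ≤ 1 := by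
      rw [div_le_one hc1]; exact_mod_cast b1
    have e2 : (F₂.card : ℝ) / (n.choose (r-1) : ℝ) ≤ 1 := by
      rw [div_le_one hc2]; exact_mod_cast b2
    linarith
  have hBdd : BddAbove {x : ℝ | ∃ F₁ F₂ : Finset (Finset (Fin n)),
      (∀ A ∈ F₁, A.card = r) ∧ (∀ A ∈ F₂, A.card = r - 1) ∧
      ¬ ContainsQ6Layers r (F₁ ∪ F₂) ∧
      x = (F₁.card : ℝ) / (n.choose r : ℝ) + (F₂.card : ℝ) / (n.choose (r - 1) : ℝ)} :=
    ⟨2, hbdd⟩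
  unfold lval
  refine csSup_le ⟨0, ∅, ∅, by simp, by simp, by simpa using empty_no_copy (r+1) (by omega), by simp⟩ ?_
  rintro x ⟨F₁, F₂, h1, h2, hnc, rfl⟩
  simp only [Nat.add_sub_cancel]
  set S : Set ℝ := {x : ℝ | ∃ F₁ F₂ : Finset (Finset (Fin n)),
      (∀ A ∈ F₁, A.card = r) ∧ (∀ A ∈ F₂, A.card = r - 1) ∧
      ¬ ContainsQ6Layers r (F₁ ∪ F₂) ∧
      x = (F₁.card : ℝ) / (n.choose r : ℝ) + (F₂.card : ℝ) / (n.choose (r - 1) : ℝ)} with hS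
  -- the link densities
  have hmemS : ∀ z : Fin (n+1),
      ((link z F₁).card : ℝ) / (n.choose r : ℝ)
        + ((link z F₂).card : ℝ) / (n.choose (r-1) : ℝ) ∈ S := by
    intro z
    refine ⟨link z F₁, link z F₂, ?_, ?_, ?_, rfl⟩
    · intro B hB
      obtain ⟨A, hA, hzA, rfl⟩ := (mem_link z F₁ B).mp hB
      rw [card_pull z A hzA, h1 A hA]; omega
    · intro B hB
      obtain ⟨A, hA, hzA, rfl⟩ := (mem_link z F₂ B).mp hB
      rw [card_pull z A hzA, h2 A hA]; omega
    · intro h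
      exact hnc (link_no_copy z F₁ F₂ h)
  have hle : ∀ z : Fin (n+1),
      ((link z F₁).card : ℝ) / (n.choose r : ℝ)
        + ((link z F₂).card : ℝ) / (n.choose (r-1) : ℝ) ≤ sSup S :=
    fun z => le_csSup hBdd (hmemS z)
  -- counting
  have hs1 : ∑ z : Fin (n+1), (link z F₁).card = (r+1) * F₁.card := by
    rw [sum_card_link, Finset.sum_congr rfl h1, Finset.sum_const, smul_eq_mul, mul_comm]
  have hs2 : ∑ z : Fin (n+1), (link z F₂).card = r * F₂.card := by
    have h2' : ∀ A ∈ F₂, A.card = r := fun A hA => by rw [h2 A hA]; omega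
    rw [sum_card_link, Finset.sum_congr rfl h2', Finset.sum_const, smul_eq_mul, mul_comm]
  have hsum1 : ∑ z : Fin (n+1), ((link z F₁).card : ℝ) = ((r:ℝ)+1) * F₁.card := by
    rw [← Nat.cast_sum, hs1]; push_cast; ring
  have hsum2 : ∑ z : Fin (n+1), ((link z F₂).card : ℝ) = (r:ℝ) * F₂.card := by
    rw [← Nat.cast_sum, hs2]; push_cast; ring
  -- binomial identities
  have k1 : ((n:ℝ)+1) * (n.choose r : ℝ) = ((n+1).choose (r+1) : ℝ) * ((r:ℝ)+1) := by
    exact_mod_cast Nat.add_one_mul_choose_eq n r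
  have k2 : ((n:ℝ)+1) * (n.choose (r-1) : ℝ) = ((n+1).choose r : ℝ) * (r:ℝ) := by
    have key := Nat.add_one_mul_choose_eq n (r-1)
    have hr1 : r - 1 + 1 = r := by omega
    simp only [Nat.succ_eq_add_one, hr1] at key
    exact_mod_cast key
  have e1 : ((n:ℝ)+1) * ((F₁.card : ℝ) / ((n+1).choose (r+1) : ℝ))
      = ((r:ℝ)+1) * F₁.card / (n.choose r : ℝ) := by
    field_simp
    linear_combination (F₁.card : ℝ) * k1
  have e2 : ((n:ℝ)+1) * ((F₂.card : ℝ) / ((n+1).choose r : ℝ))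
      = (r:ℝ) * F₂.card / (n.choose (r-1) : ℝ) := by
    field_simp
    linear_combination (F₂.card : ℝ) * k2
  have hpos : (0:ℝ) < (n:ℝ)+1 := by positivity
  rw [← mul_le_mul_iff_right₀ hpos]
  calc ((n:ℝ)+1) * ((F₁.card : ℝ) / ((n+1).choose (r+1) : ℝ)
        + (F₂.card : ℝ) / ((n+1).choose r : ℝ))
      = ∑ z : Fin (n+1), (((link z F₁).card : ℝ) / (n.choose r : ℝ)
        + ((link z F₂).card : ℝ) / (n.choose (r-1) : ℝ)) := by
        rw [mul_add, e1, e2, Finset.sum_add_distrib, ← Finset.sum_div, ← Finset.sum_div,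
          hsum1, hsum2]
    _ ≤ ∑ _z : Fin (n+1), sSup S := Finset.sum_le_sum (fun z _ => hle z)
    _ = ((n:ℝ)+1) * sSup S := by
        rw [Finset.sum_const, Finset.card_univ, Fintype.card_fin, nsmul_eq_mul]
        push_cast; ring
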